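/- Let F be a set of k mutually orthogonal frequency squares of type (n; n/m) (each an n×n array on m symbols where each symbol occurs n/m times in every row and column, and any two squares superimposed give every ordered pair of symbols exactly (n/m)^2 times). Then k ≤ (n-1)^2/(m-1). -/

import Mathlib

/-- `F` is a frequency square of type `(n;lam)` on `m` symbols: each symbol occurs
`lam` times in every row and every column. -/
def IsFreqSquare {n m : ℕ} (lam : ℕ) (F : Fin n → Fin n → Fin m) : Prop :=
  (∀ i : Fin n, ∀ s : Fin m, (Finset.univ.filter fun j => F i j = s).card = lam) ∧
  (∀ j : Fin n, ∀ s : Fin m, (Finset.univ.filter fun i => F i j = s).card = lam)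

/-- Two squares are orthogonal: every ordered pair of symbols occurs `lam ^ 2` times. -/
def AreOrth {n m : ℕ} (lam : ℕ) (F G : Fin n → Fin n → Fin m) : Prop :=
  ∀ a b : Fin m,
    (Finset.univ.filter fun p : Fin n × Fin n => F p.1 p.2 = a ∧ G p.1 p.2 = b).card = lam ^ 2

open Finset

namespace MOFSaux

variable {n m : ℕ}

/-- indicator of symbol `s` in square `F`, as a real vector on cells -/
noncomputable def chi (F : Fin n → Fin n → Fin m) (s : Fin m) (p : Fin n × Fin n) : ℝ :=
  if F p.1 p.2 = s then 1 else 0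

lemma chi_mul_chi (F G : Fin n → Fin n → Fin m) (s t : Fin m) (p : Fin n × Fin n) :
    chi F s p * chi G t p = if F p.1 p.2 = s ∧ G p.1 p.2 = t then 1 else 0 := by
  unfold chi
  by_cases h1 : F p.1 p.2 = s <;> by_cases h2 : G p.1 p.2 = t <;> simp [h1, h2]

lemma row_sum_chi {lam : ℕ} {F : Fin n → Fin n → Fin m}
    (hF : ∀ i : Fin n, ∀ s : Fin m, (Finset.univ.filter fun j => F i j = s).card = lam)
    (i : Fin n) (s : Fin m) : ∑ j, chi F s (i, j) = (lam : ℝ) := by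
  unfold chi
  rw [Finset.sum_boole, hF i s]

lemma col_sum_chi {lam : ℕ} {F : Fin n → Fin n → Fin m}
    (hF : ∀ j : Fin n, ∀ s : Fin m, (Finset.univ.filter fun i => F i j = s).card = lam)
    (j : Fin n) (s : Fin m) : ∑ i, chi F s (i, j) = (lam : ℝ) := by
  unfold chi
  rw [Finset.sum_boole, hF j s]

lemma sum_chi {lam : ℕ} {F : Fin n → Fin n → Fin m}
    (hF : ∀ i : Fin n, ∀ s : Fin m, (Finset.univ.filter fun j => F i j = s).card = lam)
    (s : Fin m) : ∑ p : Fin n × Fin n, chi F s p = (n : ℝ) * lam := by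
  rw [Fintype.sum_prod_type]
  have : ∀ i : Fin n, ∑ j, chi F s (i, j) = (lam : ℝ) := fun i => row_sum_chi hF i s
  simp [this, Finset.sum_const, mul_comm]

lemma sum_chi_mul_chi_orth {lam : ℕ} {F G : Fin n → Fin n → Fin m}
    (h : ∀ a b : Fin m,
      (Finset.univ.filter fun p : Fin n × Fin n => F p.1 p.2 = a ∧ G p.1 p.2 = b).card = lam ^ 2)
    (s t : Fin m) : ∑ p : Fin n × Fin n, chi F s p * chi G t p = (lam : ℝ) ^ 2 := by
  simp_rw [chi_mul_chi]
  rw [Finset.sum_boole, h s t]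
  push_cast; ring

lemma sum_chi_mul_chi_ne {F : Fin n → Fin n → Fin m} {s t : Fin m} (hst : s ≠ t) :
    ∑ p : Fin n × Fin n, chi F s p * chi F t p = 0 := by
  apply Finset.sum_eq_zero
  intro p _
  rw [chi_mul_chi]
  rw [if_neg]
  rintro ⟨h1, h2⟩
  exact hst (h1 ▸ h2)

lemma sum_chi_mul_chi_self {lam : ℕ} {F : Fin n → Fin n → Fin m}
    (hF : ∀ i : Fin n, ∀ s : Fin m, (Finset.univ.filter fun j => F i j = s).card = lam)
    (s : Fin m) : ∑ p : Fin n × Fin n, chi F s p * chi F s p = (n : ℝ) * lam := by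
  have : ∀ p : Fin n × Fin n, chi F s p * chi F s p = chi F s p := by
    intro p; unfold chi; split_ifs <;> ring
  simp_rw [this]
  exact sum_chi hF s

lemma expand_sum {P : Type*} [Fintype P] (f g : P → ℝ) (A : ℝ) :
    ∑ p, (f p - A) * (g p - A) =
      (∑ p, f p * g p) - A * (∑ p, f p) - A * (∑ p, g p) + (Fintype.card P : ℝ) * A ^ 2 := by
  have h : ∀ p, (f p - A) * (g p - A) = f p * g p - A * f p - A * g p + A ^ 2 := by
    intro p; ring
  simp_rw [h]
  rw [Finset.sum_add_distrib, Finset.sum_sub_distrib, Finset.sum_sub_distrib,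
    ← Finset.mul_sum, ← Finset.mul_sum, Finset.sum_const, Finset.card_univ, nsmul_eq_mul]


/-- centered indicator vector -/
noncomputable def yv (lam : ℕ) (F : Fin n → Fin n → Fin m) (s : Fin m) (p : Fin n × Fin n) : ℝ :=
  chi F s p - (lam : ℝ) / n

lemma dot_yy_orth {lam : ℕ} {F G : Fin n → Fin n → Fin m} (hn : 0 < n)
    (hF : ∀ i : Fin n, ∀ s : Fin m, (Finset.univ.filter fun j => F i j = s).card = lam)
    (hG : ∀ i : Fin n, ∀ s : Fin m, (Finset.univ.filter fun j => G i j = s).card = lam)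
    (h : ∀ a b : Fin m,
      (Finset.univ.filter fun p : Fin n × Fin n => F p.1 p.2 = a ∧ G p.1 p.2 = b).card = lam ^ 2)
    (s t : Fin m) : ∑ p : Fin n × Fin n, yv lam F s p * yv lam G t p = 0 := by
  unfold yv
  rw [expand_sum, sum_chi_mul_chi_orth h, sum_chi hF, sum_chi hG]
  have hn' : (n : ℝ) ≠ 0 := Nat.cast_ne_zero.mpr hn.ne'
  simp [Fintype.card_prod]
  field_simp
  ring

lemma dot_yy_ne {lam : ℕ} {F : Fin n → Fin n → Fin m} (hn : 0 < n)
    (hF : ∀ i : Fin n, ∀ s : Fin m, (Finset.univ.filter fun j => F i j = s).card = lam)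
    {s t : Fin m} (hst : s ≠ t) :
    ∑ p : Fin n × Fin n, yv lam F s p * yv lam F t p = -(lam : ℝ) ^ 2 := by
  unfold yv
  rw [expand_sum, sum_chi_mul_chi_ne hst, sum_chi hF, sum_chi hF]
  have hn' : (n : ℝ) ≠ 0 := Nat.cast_ne_zero.mpr hn.ne'
  simp [Fintype.card_prod]
  field_simp
  ring

lemma dot_yy_self {lam : ℕ} {F : Fin n → Fin n → Fin m} (hn : 0 < n)
    (hF : ∀ i : Fin n, ∀ s : Fin m, (Finset.univ.filter fun j => F i j = s).card = lam)
    (s : Fin m) :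
    ∑ p : Fin n × Fin n, yv lam F s p * yv lam F s p = (n : ℝ) * lam - (lam : ℝ) ^ 2 := by
  unfold yv
  rw [expand_sum, sum_chi_mul_chi_self hF, sum_chi hF]
  have hn' : (n : ℝ) ≠ 0 := Nat.cast_ne_zero.mpr hn.ne'
  simp [Fintype.card_prod]
  field_simp
  ring

lemma dot_row_y {lam : ℕ} {F : Fin n → Fin n → Fin m} (hn : 0 < n)
    (hF : ∀ i : Fin n, ∀ s : Fin m, (Finset.univ.filter fun j => F i j = s).card = lam)
    (i : Fin n) (s : Fin m) :
    ∑ p : Fin n × Fin n, (if p.1 = i then (1:ℝ) else 0) * yv lam F s p = 0 := by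
  rw [Fintype.sum_prod_type]
  rw [Finset.sum_eq_single i]
  · have hrow : ∑ j, chi F s (i, j) = (lam : ℝ) := row_sum_chi hF i s
    have hn' : (n : ℝ) ≠ 0 := Nat.cast_ne_zero.mpr hn.ne'
    simp only [if_pos rfl, if_true, one_mul]
    unfold yv
    rw [Finset.sum_sub_distrib, hrow, Finset.sum_const, Finset.card_univ, Fintype.card_fin,
      nsmul_eq_mul]
    field_simp
    ring
  · intro b _ hb
    simp [hb]
  · simp

lemma dot_col_y {lam : ℕ} {F : Fin n → Fin n → Fin m} (hn : 0 < n)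
    (hF : ∀ j : Fin n, ∀ s : Fin m, (Finset.univ.filter fun i => F i j = s).card = lam)
    (j : Fin n) (s : Fin m) :
    ∑ p : Fin n × Fin n, (if p.2 = j then (1:ℝ) else 0) * yv lam F s p = 0 := by
  rw [Fintype.sum_prod_type_right]
  rw [Finset.sum_eq_single j]
  · have hcol : ∑ i, chi F s (i, j) = (lam : ℝ) := col_sum_chi hF j s
    have hn' : (n : ℝ) ≠ 0 := Nat.cast_ne_zero.mpr hn.ne'
    simp only [if_pos rfl, if_true, one_mul]
    unfold yv
    rw [Finset.sum_sub_distrib, hcol, Finset.sum_const, Finset.card_univ, Fintype.card_fin,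
      nsmul_eq_mul]
    field_simp
    ring
  · intro b _ hb
    simp [hb]
  · simp

end MOFSaux

theorem stmt0 (n m k : ℕ) (hn : 0 < n) (hm : 2 ≤ m) (hmn : m ∣ n)
    (F : Fin k → Fin n → Fin n → Fin m)
    (hF : ∀ t, IsFreqSquare (n / m) (F t))
    (horth : ∀ s t, s ≠ t → AreOrth (n / m) (F s) (F t)) :
    (k : ℝ) ≤ ((n : ℝ) - 1) ^ 2 / ((m : ℝ) - 1) := by
  classical
  set L : ℕ := n / m with hLdef
  have hm0 : 0 < m := by omega
  have hnm : n = m * L := (Nat.mul_div_cancel' hmn).symm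
  have hL0 : 0 < L := Nat.div_pos (Nat.le_of_dvd hn hmn) hm0
  have hn2 : 2 ≤ n := by nlinarith
  have hm1 : m - 1 ≤ m := Nat.sub_le m 1
  have hn1 : n - 1 ≤ n := Nat.sub_le n 1
  have hnR : (n : ℝ) ≠ 0 := Nat.cast_ne_zero.mpr hn.ne'
  have hLR : (L : ℝ) ≠ 0 := Nat.cast_ne_zero.mpr hL0.ne'
  have hnmR : (n : ℝ) = (m : ℝ) * L := by exact_mod_cast congrArg (Nat.cast : ℕ → ℝ) hnm
  -- the family of vectors
  set v : ((Fin k × Fin (m - 1)) ⊕ (Fin n ⊕ Fin (n - 1))) → (Fin n × Fin n → ℝ) :=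
    Sum.elim (fun q => MOFSaux.yv L (F q.1) (Fin.castLE hm1 q.2))
      (Sum.elim (fun i => fun p => if p.1 = i then (1 : ℝ) else 0)
        (fun j => fun p => if p.2 = Fin.castLE hn1 j then (1 : ℝ) else 0)) with hv
  have hli : LinearIndependent ℝ v := by
    rw [Fintype.linearIndependent_iff]
    intro g hg
    have h0 : ∀ p, ∑ i, g i * v i p = 0 := by
      intro p
      have := congrFun hg p
      simpa using this
    have hdot : ∀ w : Fin n × Fin n → ℝ,
        ∑ i, g i * (∑ p, v i p * w p) = 0 := by
      intro w
      calc ∑ i, g i * ∑ p, v i p * w p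
          = ∑ i, ∑ p, (g i * v i p) * w p := by
            simp_rw [Finset.mul_sum, mul_assoc]
        _ = ∑ p, ∑ i, (g i * v i p) * w p := Finset.sum_comm
        _ = ∑ p, (∑ i, g i * v i p) * w p := by simp_rw [← Finset.sum_mul]
        _ = 0 := Finset.sum_eq_zero fun p _ => by rw [h0 p, zero_mul]
    -- step 1 : coefficients of the y-vectors vanish
    have key : ∀ t : Fin k, ∀ s' : Fin (m - 1),
        (n : ℝ) * L * g (Sum.inl (t, s')) =
          (L : ℝ) ^ 2 * ∑ s : Fin (m - 1), g (Sum.inl (t, s)) := by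
      intro t s'
      have hw := hdot (MOFSaux.yv L (F t) (Fin.castLE hm1 s'))
      rw [Fintype.sum_sum_type, Fintype.sum_sum_type, Fintype.sum_prod_type] at hw
      have hrow0 : ∑ i : Fin n, g (Sum.inr (Sum.inl i)) *
          (∑ p, v (Sum.inr (Sum.inl i)) p * MOFSaux.yv L (F t) (Fin.castLE hm1 s') p) = 0 := by
        refine Finset.sum_eq_zero fun i _ => ?_
        have := MOFSaux.dot_row_y (lam := L) hn (hF t).1 i (Fin.castLE hm1 s')
        simp only [hv, Sum.elim_inr, Sum.elim_inl]
        rw [this, mul_zero]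
      have hcol0 : ∑ j : Fin (n - 1), g (Sum.inr (Sum.inr j)) *
          (∑ p, v (Sum.inr (Sum.inr j)) p * MOFSaux.yv L (F t) (Fin.castLE hm1 s') p) = 0 := by
        refine Finset.sum_eq_zero fun j _ => ?_
        have := MOFSaux.dot_col_y (lam := L) hn (hF t).2 (Fin.castLE hn1 j) (Fin.castLE hm1 s')
        simp only [hv, Sum.elim_inr]
        rw [this, mul_zero]
      rw [hrow0, hcol0, add_zero, add_zero] at hw
      rw [Finset.sum_eq_single t] at hw
      · -- the remaining block
        have hD : ∀ s : Fin (m - 1),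
            (∑ p, v (Sum.inl (t, s)) p * MOFSaux.yv L (F t) (Fin.castLE hm1 s') p) =
              if s = s' then (n : ℝ) * L - (L : ℝ) ^ 2 else -(L : ℝ) ^ 2 := by
          intro s
          by_cases hss : s = s'
          · subst hss
            simp only [hv, Sum.elim_inl, if_pos rfl]
            exact MOFSaux.dot_yy_self hn (hF t).1 _
          · rw [if_neg hss]
            simp only [hv, Sum.elim_inl]
            exact MOFSaux.dot_yy_ne hn (hF t).1
              (fun h => hss (Fin.castLE_inj.mp h))
        simp_rw [hD] at hw
        have : ∑ s : Fin (m - 1),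
            g (Sum.inl (t, s)) * (if s = s' then (n : ℝ) * L - (L : ℝ) ^ 2 else -(L : ℝ) ^ 2)
            = ∑ s : Fin (m - 1), ((( n : ℝ) * L) * (if s = s' then g (Sum.inl (t, s)) else 0)
                - (L : ℝ) ^ 2 * g (Sum.inl (t, s))) := by
          refine Finset.sum_congr rfl fun s _ => ?_
          split_ifs <;> ring
        rw [this, Finset.sum_sub_distrib, ← Finset.mul_sum, ← Finset.mul_sum,
          Finset.sum_ite_eq' Finset.univ s' (fun s => g (Sum.inl (t, s)))] at hw
        simp only [Finset.mem_univ, if_true] at hw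
        linarith
      · intro t' _ htt'
        refine Finset.sum_eq_zero fun s _ => ?_
        have := MOFSaux.dot_yy_orth (lam := L) hn (hF t').1 (hF t).1
          (horth t' t htt') (Fin.castLE hm1 s) (Fin.castLE hm1 s')
        simp only [hv, Sum.elim_inl]
        rw [this, mul_zero]
      · simp
    have step1 : ∀ t : Fin k, ∀ s : Fin (m - 1), g (Sum.inl (t, s)) = 0 := by
      intro t
      have hA : ∑ s : Fin (m - 1), g (Sum.inl (t, s)) = 0 := by
        set A := ∑ s : Fin (m - 1), g (Sum.inl (t, s)) with hAdef
        have hsum : (n : ℝ) * L * A = ((m - 1 : ℕ) : ℝ) * ((L : ℝ) ^ 2 * A) := by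
          rw [hAdef, Finset.mul_sum]
          rw [Finset.sum_congr rfl fun s _ => key t s]
          simp [Finset.sum_const, Fintype.card_fin, nsmul_eq_mul]
        have hmcast : ((m - 1 : ℕ) : ℝ) = (m : ℝ) - 1 := by
          push_cast [Nat.cast_sub (by omega : 1 ≤ m)]
          ring
        rw [hmcast, hnmR] at hsum
        have hL2 : (L : ℝ) ^ 2 * A = 0 := by linear_combination hsum
        have : (L : ℝ) ^ 2 ≠ 0 := pow_ne_zero 2 hLR
        exact (mul_eq_zero.mp hL2).resolve_left this
      intro s
      have := key t s
      rw [hA, mul_zero] at this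
      have hne : (n : ℝ) * L ≠ 0 := mul_ne_zero hnR hLR
      exact (mul_eq_zero.mp this).resolve_left hne
    -- step 2 : rows and columns
    have h0' : ∀ p : Fin n × Fin n,
        g (Sum.inr (Sum.inl p.1)) +
          ∑ j : Fin (n - 1), g (Sum.inr (Sum.inr j)) *
            (if p.2 = Fin.castLE hn1 j then (1 : ℝ) else 0) = 0 := by
      intro p
      have := h0 p
      rw [Fintype.sum_sum_type, Fintype.sum_sum_type, Fintype.sum_prod_type] at this
      have hz : ∑ t : Fin k, ∑ s : Fin (m - 1), g (Sum.inl (t, s)) * v (Sum.inl (t, s)) p = 0 :=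
        Finset.sum_eq_zero fun t _ => Finset.sum_eq_zero fun s _ => by
          rw [step1 t s, zero_mul]
      rw [hz, zero_add] at this
      have hr : ∑ i : Fin n, g (Sum.inr (Sum.inl i)) * v (Sum.inr (Sum.inl i)) p
          = g (Sum.inr (Sum.inl p.1)) := by
        simp only [hv, Sum.elim_inr, Sum.elim_inl, mul_ite, mul_one, mul_zero]
        rw [Finset.sum_ite_eq Finset.univ p.1 (fun i => g (Sum.inr (Sum.inl i)))]
        simp
      rw [hr] at this
      simpa only [hv, Sum.elim_inr] using this
    have steprow : ∀ i : Fin n, g (Sum.inr (Sum.inl i)) = 0 := by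
      intro i
      have hlast : (⟨n - 1, by omega⟩ : Fin n) = (⟨n - 1, by omega⟩ : Fin n) := rfl
      have := h0' (i, ⟨n - 1, by omega⟩)
      have hz : ∑ j : Fin (n - 1), g (Sum.inr (Sum.inr j)) *
          (if ((⟨n - 1, by omega⟩ : Fin n) : Fin n) = Fin.castLE hn1 j then (1 : ℝ) else 0) = 0 := by
        refine Finset.sum_eq_zero fun j _ => ?_
        rw [if_neg, mul_zero]
        intro h
        have hj := j.isLt
        have : n - 1 = (j : ℕ) := by
          have := congrArg Fin.val h
          simpa using this
        omega
      rw [hz, add_zero] at this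
      exact this
    have stepcol : ∀ j : Fin (n - 1), g (Sum.inr (Sum.inr j)) = 0 := by
      intro j
      have := h0' (⟨0, hn⟩, Fin.castLE hn1 j)
      rw [steprow ⟨0, hn⟩, zero_add] at this
      rw [Finset.sum_congr rfl (fun j' _ => by
        rw [show (if (Fin.castLE hn1 j : Fin n) = Fin.castLE hn1 j' then (1 : ℝ) else 0)
            = (if j' = j then (1 : ℝ) else 0) by
          by_cases h : j' = j
          · subst h; simp
          · rw [if_neg h, if_neg (fun hc => h (Fin.castLE_inj.mp hc.symm))]])] at this
      simp only [mul_ite, mul_one, mul_zero] at this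
      rw [Finset.sum_ite_eq' Finset.univ j (fun j' => g (Sum.inr (Sum.inr j')))] at this
      simpa using this
    rintro (⟨t, s⟩ | i | j)
    · exact step1 t s
    · exact steprow i
    · exact stepcol j
  -- dimension count
  have hcard := hli.fintype_card_le_finrank
  rw [Module.finrank_fintype_fun_eq_card] at hcard
  simp only [Fintype.card_sum, Fintype.card_prod, Fintype.card_fin] at hcard
  -- hcard : k * (m-1) + (n + (n-1)) ≤ n * n
  have hR : ((k * (m - 1) + (n + (n - 1)) : ℕ) : ℝ) ≤ ((n * n : ℕ) : ℝ) := by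
    exact_mod_cast hcard
  push_cast [Nat.cast_sub (by omega : 1 ≤ m), Nat.cast_sub (by omega : 1 ≤ n)] at hR
  have hm1R : (0 : ℝ) < (m : ℝ) - 1 := by
    have : (2 : ℝ) ≤ (m : ℝ) := by exact_mod_cast hm
    linarith
  rw [le_div_iff₀ hm1R]
  nlinarith [hR]
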